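/- Under the stated hypotheses on j, M, κ, λ, let U_j := {A : A ⊆ 𝒫_κ(λ) and j''λ ∈ j(A)}, let 𝒲 be the collection of ZFSet-functions with domain 𝒫_κ(λ), and for f ∈ 𝒲 let j(f)(j''λ) denote the unique ZFSet c with the ordered pair ⟨j''λ, c⟩ ∈ j(f). Then for all f, g ∈ 𝒲: {x ∈ 𝒫_κ(λ) : f(x) = g(x)} ∈ U_j iff j(f)(j''λ) = j(g)(j''λ), and {x ∈ 𝒫_κ(λ) : f(x) ∈ g(x)} ∈ U_j iff j(f)(j''λ) ∈ j(g)(j''λ). Consequently the relation f ∈_{U_j} g :⟺ {x : f(x) ∈ g(x)} ∈ U_j is well-founded, i.e. U_j is steep. (Single-universe form of Claim 2.4.1.) -/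

import Mathlib

open FirstOrder

/-- The language `L_ε` with a single binary relation symbol (Mathlib's graph language,
whose unique binary relation we interpret as membership). -/
abbrev Lε : FirstOrder.Language := FirstOrder.Language.graph

/-- Any type with a binary relation is an `L_ε`-structure. -/
def memStruc (S : Type*) (r : S → S → Prop) : Lε.Structure S where
  RelMap | .adj => fun x => r (x 0) (x 1)

/-- Satisfaction of an `L_ε`-formula in the structure given by a binary relation `r` on `S`. -/
def RealizeIn (S : Type*) (r : S → S → Prop) {n : ℕ}
    (φ : Lε.Formula (Fin n)) (v : Fin n → S) : Prop :=
  @FirstOrder.Language.Formula.Realize Lε S (memStruc S r) _ φ v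

/-- `x` is a von Neumann ordinal: a transitive set of transitive sets. -/
def IsOrd (x : ZFSet) : Prop := x.IsTransitive ∧ ∀ y ∈ x, ZFSet.IsTransitive y

/-- `f` is an injective ZFSet-function from `x` to `y`. -/
def IsInjFn (x y f : ZFSet) : Prop :=
  ZFSet.IsFunc x y f ∧
    ∀ a ∈ x, ∀ b ∈ x, ∀ c : ZFSet, ZFSet.pair a c ∈ f → ZFSet.pair b c ∈ f → a = b

/-- `f` is a ZFSet-bijection between `x` and `y`. -/
def IsBijFn (x y f : ZFSet) : Prop :=
  IsInjFn x y f ∧ ∀ c ∈ y, ∃ a ∈ x, ZFSet.pair a c ∈ f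

/-- `x` is a cardinal: an ordinal admitting no ZFSet-bijection with any of its elements. -/
def IsCard (x : ZFSet) : Prop := IsOrd x ∧ ∀ y ∈ x, ¬ ∃ f : ZFSet, IsBijFn x y f

/-- `𝒫_κ(λ)`: the ZFSet of all subsets of `λ` admitting a ZFSet-injection into some
element of `κ`. -/
def Pk (κ lam : ZFSet) : ZFSet :=
  ZFSet.sep (fun x => ∃ e ∈ κ, ∃ f : ZFSet, IsInjFn x e f) (ZFSet.powerset lam)

/-- `f` is a ZFSet-function: a single-valued set of (Kuratowski) ordered pairs. -/
def IsZFFunc (f : ZFSet) : Prop :=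
  (∀ p ∈ f, ∃ x y : ZFSet, p = ZFSet.pair x y) ∧
    ∀ x y y' : ZFSet, ZFSet.pair x y ∈ f → ZFSet.pair x y' ∈ f → y = y'

/-- The domain of a ZFSet-function. -/
def dom (f : ZFSet) : ZFSet :=
  ZFSet.sep (fun x => ∃ y : ZFSet, ZFSet.pair x y ∈ f) (ZFSet.sUnion (ZFSet.sUnion f))

/-- `f` is a ZFSet-function with domain `I`. -/
def IsFuncOn (I f : ZFSet) : Prop := IsZFFunc f ∧ dom f = I

open Classical in
/-- The value `f(x)` of a ZFSet-function at `x`. -/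
noncomputable def app (f x : ZFSet) : ZFSet :=
  if h : ∃ y : ZFSet, ZFSet.pair x y ∈ f then h.choose else ∅

set_option linter.unusedVariables false

open FirstOrder.Language

namespace Claim

abbrev BF (m k : ℕ) := Lε.BoundedFormula (Fin m) k
abbrev TM (m k : ℕ) := Lε.Term (Fin m ⊕ Fin k)

/-- lift a term across one quantifier -/
def lt' {m k : ℕ} (t : TM m k) : TM m (k+1) := t.relabel (Sum.map id Fin.castSucc)

def memF {m k : ℕ} (t u : TM m k) : BF m k := Language.adj.boundedFormula₂ t u
def eqF {m k : ℕ} (t u : TM m k) : BF m k := Term.bdEqual t u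

/-- the innermost bound variable -/
def vL {m k : ℕ} : TM m (k+1) := Term.var (Sum.inr (Fin.last k))

section real
variable {S : Type*} (r : S → S → Prop)

/-- realize in the memStruc structure -/
def Rl {m k : ℕ} (φ : BF m k) (v : Fin m → S) (xs : Fin k → S) : Prop :=
  @FirstOrder.Language.BoundedFormula.Realize Lε S (memStruc S r) (Fin m) k φ v xs

variable {r}

@[simp] lemma rl_memF {m k : ℕ} (t u : TM m k) (v : Fin m → S) (xs : Fin k → S) :
    Rl r (memF t u) v xs ↔
      r (@Term.realize Lε S (memStruc S r) _ (Sum.elim v xs) t)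
        (@Term.realize Lε S (memStruc S r) _ (Sum.elim v xs) u) := by
  letI := memStruc S r
  simp only [Rl, memF, BoundedFormula.realize_rel₂]
  rfl

@[simp] lemma rl_eqF {m k : ℕ} (t u : TM m k) (v : Fin m → S) (xs : Fin k → S) :
    Rl r (eqF t u) v xs ↔
      (@Term.realize Lε S (memStruc S r) _ (Sum.elim v xs) t)
        = (@Term.realize Lε S (memStruc S r) _ (Sum.elim v xs) u) := by
  letI := memStruc S r
  simp only [Rl, eqF, BoundedFormula.realize_bdEqual]

@[simp] lemma realize_lt' {m k : ℕ} (t : TM m k) (v : Fin m → S) (xs : Fin k → S) (a : S) :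
    @Term.realize Lε S (memStruc S r) _ (Sum.elim v (Fin.snoc xs a)) (lt' t)
      = @Term.realize Lε S (memStruc S r) _ (Sum.elim v xs) t := by
  letI := memStruc S r
  rw [lt', Term.realize_relabel]
  congr 1
  funext s
  rcases s with i | i <;> simp

@[simp] lemma realize_vL {m k : ℕ} (v : Fin m → S) (xs : Fin k → S) (a : S) :
    @Term.realize Lε S (memStruc S r) _ (Sum.elim v (Fin.snoc xs a)) (vL) = a := by
  letI := memStruc S r
  simp [vL]

@[simp] lemma rl_inf {m k : ℕ} (φ ψ : BF m k) (v xs) :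
    Rl r (φ ⊓ ψ) v xs ↔ Rl r φ v xs ∧ Rl r ψ v xs := by
  simp only [Rl, BoundedFormula.realize_inf]

@[simp] lemma rl_sup {m k : ℕ} (φ ψ : BF m k) (v xs) :
    Rl r (φ ⊔ ψ) v xs ↔ Rl r φ v xs ∨ Rl r ψ v xs := by
  simp only [Rl, BoundedFormula.realize_sup]

@[simp] lemma rl_imp {m k : ℕ} (φ ψ : BF m k) (v xs) :
    Rl r (φ ⟹ ψ) v xs ↔ (Rl r φ v xs → Rl r ψ v xs) := by
  simp only [Rl, BoundedFormula.realize_imp]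

@[simp] lemma rl_iffF {m k : ℕ} (φ ψ : BF m k) (v xs) :
    Rl r (φ ⇔ ψ) v xs ↔ (Rl r φ v xs ↔ Rl r ψ v xs) := by
  simp only [Rl, BoundedFormula.realize_iff]

@[simp] lemma rl_all {m k : ℕ} (φ : BF m (k+1)) (v xs) :
    Rl r (∀' φ) v xs ↔ ∀ a : S, Rl r φ v (Fin.snoc xs a) := by
  simp only [Rl, BoundedFormula.realize_all]

@[simp] lemma rl_ex {m k : ℕ} (φ : BF m (k+1)) (v xs) :
    Rl r (∃' φ) v xs ↔ ∃ a : S, Rl r φ v (Fin.snoc xs a) := by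
  simp only [Rl, BoundedFormula.realize_ex]

end real



def singF {m k : ℕ} (p x : TM m k) : BF m k :=
  memF x p ⊓ ∀' (memF vL (lt' p) ⟹ eqF vL (lt' x))

def pairsetF {m k : ℕ} (q x y : TM m k) : BF m k :=
  memF x q ⊓ memF y q ⊓ ∀' (memF vL (lt' q) ⟹ (eqF vL (lt' x) ⊔ eqF vL (lt' y)))

def isPairF {m k : ℕ} (z x y : TM m k) : BF m k :=
  ∃' ∃' (memF (lt' vL) (lt' (lt' z)) ⊓ memF vL (lt' (lt' z)) ⊓
    singF (lt' vL) (lt' (lt' x)) ⊓ pairsetF vL (lt' (lt' x)) (lt' (lt' y)) ⊓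
    ∀' (memF vL (lt' (lt' (lt' z))) ⟹ (eqF vL (lt' (lt' vL)) ⊔ eqF vL (lt' vL))))

def pairMemF {m k : ℕ} (x y f : TM m k) : BF m k :=
  ∃' (memF vL (lt' f) ⊓ isPairF vL (lt' x) (lt' y))

section abs
variable {S : Type*} {r : S → S → Prop} {e : S → ZFSet}
/-- term realization -/
def TR (r : S → S → Prop) {m k : ℕ} (v : Fin m → S) (xs : Fin k → S) (t : TM m k) : S :=
  @Term.realize Lε S (memStruc S r) _ (Sum.elim v xs) t

lemma abs_singF (he_inj : Function.Injective e) (he_mem : ∀ a b : S, r a b ↔ e a ∈ e b)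
    (he_tr : ∀ (a : S) (y : ZFSet), y ∈ e a → ∃ b : S, e b = y)
    {m k : ℕ} (p x : TM m k) (v : Fin m → S) (xs : Fin k → S) :
    Rl r (singF p x) v xs ↔ e (TR r v xs p) = {e (TR r v xs x)} := by
  simp only [TR, singF, rl_inf, rl_all, rl_imp, rl_eqF, rl_memF, realize_lt', realize_vL]
  rw [he_mem]
  constructor
  · rintro ⟨h1, h2⟩
    apply ZFSet.ext
    intro z
    simp only [ZFSet.mem_singleton]
    constructor
    · intro hz
      obtain ⟨b, rfl⟩ := he_tr _ _ hz
      rw [← he_mem] at hz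
      exact congrArg e (h2 b hz)
    · rintro rfl; exact h1
  · intro hpx
    constructor
    · rw [hpx]; exact ZFSet.mem_singleton.2 rfl
    · intro u hu
      rw [he_mem, hpx, ZFSet.mem_singleton] at hu
      exact he_inj hu

lemma abs_pairsetF (he_inj : Function.Injective e) (he_mem : ∀ a b : S, r a b ↔ e a ∈ e b)
    (he_tr : ∀ (a : S) (y : ZFSet), y ∈ e a → ∃ b : S, e b = y)
    {m k : ℕ} (q x y : TM m k) (v : Fin m → S) (xs : Fin k → S) :
    Rl r (pairsetF q x y) v xs ↔ e (TR r v xs q) = {e (TR r v xs x), e (TR r v xs y)} := by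
  simp only [TR, pairsetF, rl_inf, rl_all, rl_imp, rl_sup, rl_eqF, rl_memF, realize_lt', realize_vL]
  rw [he_mem, he_mem]
  constructor
  · rintro ⟨⟨h1, h2⟩, h3⟩
    apply ZFSet.ext
    intro z
    simp only [ZFSet.mem_pair]
    constructor
    · intro hz
      obtain ⟨b, rfl⟩ := he_tr _ _ hz
      rw [← he_mem] at hz
      rcases h3 b hz with h | h
      · exact Or.inl (congrArg e h)
      · exact Or.inr (congrArg e h)
    · rintro (rfl | rfl)
      exacts [h1, h2]
  · intro hq
    refine ⟨⟨?_, ?_⟩, ?_⟩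
    · rw [hq]; exact ZFSet.mem_pair.2 (Or.inl rfl)
    · rw [hq]; exact ZFSet.mem_pair.2 (Or.inr rfl)
    · intro u hu
      rw [he_mem, hq, ZFSet.mem_pair] at hu
      rcases hu with h | h
      · exact Or.inl (he_inj h)
      · exact Or.inr (he_inj h)

lemma abs_isPairF (he_inj : Function.Injective e) (he_mem : ∀ a b : S, r a b ↔ e a ∈ e b)
    (he_tr : ∀ (a : S) (y : ZFSet), y ∈ e a → ∃ b : S, e b = y)
    {m k : ℕ} (z x y : TM m k) (v : Fin m → S) (xs : Fin k → S) :
    Rl r (isPairF z x y) v xs ↔ e (TR r v xs z) = ZFSet.pair (e (TR r v xs x)) (e (TR r v xs y)) := by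
  letI := memStruc S r
  simp only [TR, isPairF, rl_ex, rl_inf, rl_all, rl_imp, rl_sup, rl_eqF, rl_memF,
    abs_singF he_inj he_mem he_tr, abs_pairsetF he_inj he_mem he_tr, realize_lt', realize_vL]
  constructor
  · rintro ⟨p, q, ⟨⟨⟨hpz, hqz⟩, hp⟩, hq⟩, hmax⟩
    rw [he_mem] at hpz hqz
    apply ZFSet.ext
    intro w
    rw [ZFSet.pair, ZFSet.mem_pair]
    constructor
    · intro hw
      obtain ⟨b, rfl⟩ := he_tr _ _ hw
      rw [← he_mem] at hw
      rcases hmax b hw with h | h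
      · subst h; exact Or.inl hp
      · subst h; exact Or.inr hq
    · rintro (rfl | rfl)
      · rwa [← hp]
      · rwa [← hq]
  · intro hz
    have hxmem : ({e (Term.realize (M := S) (Sum.elim v xs) x)} : ZFSet)
        ∈ e (Term.realize (Sum.elim v xs) z) := by
      rw [hz, ZFSet.pair]; exact ZFSet.mem_pair.2 (Or.inl rfl)
    have hymem : ({e (Term.realize (M := S) (Sum.elim v xs) x),
        e (Term.realize (Sum.elim v xs) y)} : ZFSet) ∈ e (Term.realize (Sum.elim v xs) z) := by
      rw [hz, ZFSet.pair]; exact ZFSet.mem_pair.2 (Or.inr rfl)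
    obtain ⟨p, hp⟩ := he_tr _ _ hxmem
    obtain ⟨q, hq⟩ := he_tr _ _ hymem
    refine ⟨p, q, ⟨⟨⟨?_, ?_⟩, hp⟩, hq⟩, ?_⟩
    · rw [he_mem, hp]; exact hxmem
    · rw [he_mem, hq]; exact hymem
    · intro w hw
      rw [he_mem, hz, ZFSet.pair, ZFSet.mem_pair] at hw
      rcases hw with h | h
      · left; apply he_inj; rw [hp, h]
      · right; apply he_inj; rw [hq, h]

lemma abs_pairMemF (he_inj : Function.Injective e) (he_mem : ∀ a b : S, r a b ↔ e a ∈ e b)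
    (he_tr : ∀ (a : S) (y : ZFSet), y ∈ e a → ∃ b : S, e b = y)
    {m k : ℕ} (x y f : TM m k) (v : Fin m → S) (xs : Fin k → S) :
    Rl r (pairMemF x y f) v xs ↔ ZFSet.pair (e (TR r v xs x)) (e (TR r v xs y)) ∈ e (TR r v xs f) := by
  simp only [TR, pairMemF, rl_ex, rl_inf, rl_memF, abs_isPairF he_inj he_mem he_tr,
    realize_lt', realize_vL]
  constructor
  · rintro ⟨c, hcf, hc⟩
    rw [he_mem] at hcf
    rwa [← hc]
  · intro h
    obtain ⟨c, hc⟩ := he_tr _ _ h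
    exact ⟨c, by rw [he_mem, hc]; exact h, hc⟩

end abs

/-- atomic membership formula in two free variables -/
def memF₂ : Lε.Formula (Fin 2) := memF (Term.var (Sum.inl 0)) (Term.var (Sum.inl 1))

/-- atomic equality formula in two free variables -/
def eqF₂ : Lε.Formula (Fin 2) := eqF (Term.var (Sum.inl 0)) (Term.var (Sum.inl 1))

/-- "f (var 0) is a function with domain ⊇/= described by var 1" :
totality on var 1 plus single-valuedness. -/
def F1 : Lε.Formula (Fin 2) :=
  (∀' (memF vL (Term.var (Sum.inl 1)) ⟹
    ∃' (pairMemF (lt' vL) vL (Term.var (Sum.inl 0))))) ⊓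
  (∀' ∀' ∀' ((pairMemF (lt' (lt' vL)) (lt' vL) (Term.var (Sum.inl 0)) ⊓
      pairMemF (lt' (lt' vL)) vL (Term.var (Sum.inl 0))) ⟹ eqF (lt' vL) vL))

/-- var 2 = {x ∈ var 3 : (var 0)(x) = (var 1)(x)} -/
def F2 : Lε.Formula (Fin 4) :=
  ∀' (memF vL (Term.var (Sum.inl 2)) ⇔
    (memF vL (Term.var (Sum.inl 3)) ⊓
      ∃' (pairMemF (lt' vL) vL (Term.var (Sum.inl 0)) ⊓
          pairMemF (lt' vL) vL (Term.var (Sum.inl 1)))))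

/-- var 2 = {x ∈ var 3 : (var 0)(x) ∈ (var 1)(x)} -/
def F3 : Lε.Formula (Fin 4) :=
  ∀' (memF vL (Term.var (Sum.inl 2)) ⇔
    (memF vL (Term.var (Sum.inl 3)) ⊓
      ∃' ∃' (pairMemF (lt' (lt' vL)) (lt' vL) (Term.var (Sum.inl 0)) ⊓
          pairMemF (lt' (lt' vL)) vL (Term.var (Sum.inl 1)) ⊓ memF (lt' vL) vL)))

section charf
variable {S : Type*} {r : S → S → Prop} {e : S → ZFSet}

lemma realizeIn_rl {m : ℕ} (φ : Lε.Formula (Fin m)) (v : Fin m → S) :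
    RealizeIn S r φ v = Rl r φ v default := rfl

lemma rl_memF₂ (v : Fin 2 → S) : RealizeIn S r memF₂ v ↔ r (v 0) (v 1) := by
  rw [realizeIn_rl]
  simp [memF₂]

lemma rl_eqF₂ (v : Fin 2 → S) : RealizeIn S r eqF₂ v ↔ v 0 = v 1 := by
  rw [realizeIn_rl]
  simp [eqF₂]

lemma rl_F1 (he_inj : Function.Injective e) (he_mem : ∀ a b : S, r a b ↔ e a ∈ e b)
    (he_tr : ∀ (a : S) (y : ZFSet), y ∈ e a → ∃ b : S, e b = y) (v : Fin 2 → S) :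
    RealizeIn S r F1 v ↔
      ((∀ x : S, r x (v 1) → ∃ y : S, ZFSet.pair (e x) (e y) ∈ e (v 0)) ∧
        (∀ x y y' : S, ZFSet.pair (e x) (e y) ∈ e (v 0) →
          ZFSet.pair (e x) (e y') ∈ e (v 0) → y = y')) := by
  rw [realizeIn_rl]
  simp only [F1, rl_inf, rl_all, rl_imp, rl_ex, rl_memF, rl_eqF,
    abs_pairMemF he_inj he_mem he_tr, TR, realize_lt', realize_vL,
    Term.realize_var, Sum.elim_inl]
  tauto

lemma rl_F2 (he_inj : Function.Injective e) (he_mem : ∀ a b : S, r a b ↔ e a ∈ e b)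
    (he_tr : ∀ (a : S) (y : ZFSet), y ∈ e a → ∃ b : S, e b = y) (v : Fin 4 → S) :
    RealizeIn S r F2 v ↔
      ∀ x : S, (r x (v 2) ↔ (r x (v 3) ∧
        ∃ y : S, ZFSet.pair (e x) (e y) ∈ e (v 0) ∧ ZFSet.pair (e x) (e y) ∈ e (v 1))) := by
  rw [realizeIn_rl]
  simp only [F2, rl_iffF, rl_inf, rl_all, rl_imp, rl_ex, rl_memF,
    abs_pairMemF he_inj he_mem he_tr, TR, realize_lt', realize_vL,
    Term.realize_var, Sum.elim_inl]

lemma rl_F3 (he_inj : Function.Injective e) (he_mem : ∀ a b : S, r a b ↔ e a ∈ e b)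
    (he_tr : ∀ (a : S) (y : ZFSet), y ∈ e a → ∃ b : S, e b = y) (v : Fin 4 → S) :
    RealizeIn S r F3 v ↔
      ∀ x : S, (r x (v 2) ↔ (r x (v 3) ∧
        ∃ b c : S, ZFSet.pair (e x) (e b) ∈ e (v 0) ∧
          ZFSet.pair (e x) (e c) ∈ e (v 1) ∧ r b c)) := by
  rw [realizeIn_rl]
  simp only [F3, rl_iffF, rl_inf, rl_all, rl_imp, rl_ex, rl_memF,
    abs_pairMemF he_inj he_mem he_tr, TR, realize_lt', realize_vL,
    Term.realize_var, Sum.elim_inl]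
  constructor
  · intro h x
    rw [h x]
    tauto
  · intro h x
    rw [h x]
    tauto

end charf

end Claim


namespace Claim

lemma app_eq_of {f x c : ZFSet} (h : ZFSet.pair x c ∈ f)
    (hu : ∀ y, ZFSet.pair x y ∈ f → y = c) : app f x = c := by
  have hex : ∃ y, ZFSet.pair x y ∈ f := ⟨c, h⟩
  rw [app, dif_pos hex]
  exact hu _ hex.choose_spec

lemma exists_pair_of_mem {I f x : ZFSet} (hf : IsFuncOn I f) (hx : x ∈ I) :
    ∃ y, ZFSet.pair x y ∈ f := by
  rw [← hf.2] at hx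
  exact (ZFSet.mem_sep.1 hx).2

end Claim

/-- Claim 2.4.1 (single-universe form): with `U_j := {A ⊆ 𝒫_κ(λ) : j''λ ∈ j(A)}` and
`𝒲` the ZFSet-functions with domain `𝒫_κ(λ)`, for all `f, g ∈ 𝒲` we have
`{x : f(x) = g(x)} ∈ U_j ↔ j(f)(j''λ) = j(g)(j''λ)` and
`{x : f(x) ∈ g(x)} ∈ U_j ↔ j(f)(j''λ) ∈ j(g)(j''λ)`; consequently the relation
`∈_{U_j}` on `𝒲` is well-founded, i.e. `U_j` is steep. -/
theorem claim_2_4_1 (κ lam : ZFSet) (hκcard : IsCard κ) (hlam : IsOrd lam) (hkl : κ ⊆ lam)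
    (M : ZFSet → Prop) (hMtrans : ∀ x y : ZFSet, M x → y ∈ x → M y)
    (j : ZFSet → {x : ZFSet // M x})
    (helem : ∀ (n : ℕ) (φ : Lε.Formula (Fin n)) (v : Fin n → ZFSet),
      RealizeIn ZFSet (· ∈ ·) φ v ↔
        RealizeIn {x : ZFSet // M x} (fun a b => a.1 ∈ b.1) φ (fun i => j (v i)))
    (hcrit : ∀ ξ ∈ κ, (j ξ).1 = ξ)
    (hjump : lam ∈ (j κ).1)
    (jlam : ZFSet) (hjlam : ∀ y : ZFSet, y ∈ jlam ↔ ∃ ξ ∈ lam, (j ξ).1 = y)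
    (hMjlam : M jlam) (hjlammem : jlam ∈ (j (Pk κ lam)).1) :
    (∀ f g : ZFSet, IsFuncOn (Pk κ lam) f → IsFuncOn (Pk κ lam) g →
      ((ZFSet.sep (fun x => app f x = app g x) (Pk κ lam) ∈
          {A : ZFSet | A ⊆ Pk κ lam ∧ jlam ∈ (j A).1}) ↔
            app (j f).1 jlam = app (j g).1 jlam) ∧
      ((ZFSet.sep (fun x => app f x ∈ app g x) (Pk κ lam) ∈
          {A : ZFSet | A ⊆ Pk κ lam ∧ jlam ∈ (j A).1}) ↔
            app (j f).1 jlam ∈ app (j g).1 jlam)) ∧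
    WellFounded (fun f g : {h : ZFSet // IsFuncOn (Pk κ lam) h} =>
      ZFSet.sep (fun x => app f.1 x ∈ app g.1 x) (Pk κ lam) ∈
        {A : ZFSet | A ⊆ Pk κ lam ∧ jlam ∈ (j A).1}) := by
  classical
  have vinj : Function.Injective (id : ZFSet → ZFSet) := fun a b h => h
  have vmem : ∀ a b : ZFSet, a ∈ b ↔ id a ∈ id b := fun _ _ => Iff.rfl
  have vtr : ∀ (a y : ZFSet), y ∈ id a → ∃ b : ZFSet, id b = y := fun _ y _ => ⟨y, rfl⟩
  have minj : Function.Injective (Subtype.val : {x : ZFSet // M x} → ZFSet) :=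
    Subtype.val_injective
  have mmem : ∀ a b : {x : ZFSet // M x},
      (fun a b : {x : ZFSet // M x} => a.1 ∈ b.1) a b ↔ a.1 ∈ b.1 := fun _ _ => Iff.rfl
  have mtr : ∀ (a : {x : ZFSet // M x}) (y : ZFSet), y ∈ a.1 →
      ∃ b : {x : ZFSet // M x}, b.1 = y := fun a y hy => ⟨⟨y, hMtrans a.1 y a.2 hy⟩, rfl⟩
  have hMval : ∀ (F : {x : ZFSet // M x}) (x y : ZFSet), ZFSet.pair x y ∈ F.1 → M y := by
    intro F x y hy
    have h1 : M (ZFSet.pair x y) := hMtrans _ _ F.2 hy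
    have h2 : M ({x, y} : ZFSet) :=
      hMtrans _ _ h1 (by rw [ZFSet.pair]; exact ZFSet.mem_pair.2 (Or.inr rfl))
    exact hMtrans _ _ h2 (ZFSet.mem_pair.2 (Or.inr rfl))
  -- facts about j F for F a function on Pk κ lam
  have jfacts : ∀ F : ZFSet, IsFuncOn (Pk κ lam) F →
      ∃ c : ZFSet, M c ∧ ZFSet.pair jlam c ∈ (j F).1 ∧
        app (j F).1 jlam = c ∧ ∀ y, ZFSet.pair jlam y ∈ (j F).1 → y = c := by
    intro F hF
    have hV : RealizeIn ZFSet (· ∈ ·) Claim.F1 ![F, Pk κ lam] := by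
      rw [Claim.rl_F1 vinj vmem vtr]
      simp only [Matrix.cons_val_zero, Matrix.cons_val_one, Matrix.head_cons, id_eq]
      exact ⟨fun x hx => Claim.exists_pair_of_mem hF hx,
        fun x y y' h1 h2 => hF.1.2 x y y' h1 h2⟩
    have hM := (helem 2 Claim.F1 ![F, Pk κ lam]).1 hV
    rw [Claim.rl_F1 minj mmem mtr] at hM
    simp only [Matrix.cons_val_zero, Matrix.cons_val_one, Matrix.head_cons] at hM
    obtain ⟨htot, huniq⟩ := hM
    obtain ⟨cf, hcf⟩ := htot ⟨jlam, hMjlam⟩ hjlammem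
    have hu : ∀ y, ZFSet.pair jlam y ∈ (j F).1 → y = cf.1 := by
      intro y hy
      have hMy : M y := hMval (j F) jlam y hy
      exact congrArg Subtype.val (huniq ⟨jlam, hMjlam⟩ ⟨y, hMy⟩ cf hy hcf)
    exact ⟨cf.1, cf.2, hcf, Claim.app_eq_of hcf hu, hu⟩
  have key : ∀ f g : ZFSet, IsFuncOn (Pk κ lam) f → IsFuncOn (Pk κ lam) g →
      ((ZFSet.sep (fun x => app f x = app g x) (Pk κ lam) ∈
          {A : ZFSet | A ⊆ Pk κ lam ∧ jlam ∈ (j A).1}) ↔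
            app (j f).1 jlam = app (j g).1 jlam) ∧
      ((ZFSet.sep (fun x => app f x ∈ app g x) (Pk κ lam) ∈
          {A : ZFSet | A ⊆ Pk κ lam ∧ jlam ∈ (j A).1}) ↔
            app (j f).1 jlam ∈ app (j g).1 jlam) := by
    intro f g hf hg
    obtain ⟨cf, hMcf, hcf, happf, huf⟩ := jfacts f hf
    obtain ⟨cg, hMcg, hcg, happg, hug⟩ := jfacts g hg
    constructor
    · -- equality case
      set S₀ := ZFSet.sep (fun x => app f x = app g x) (Pk κ lam) with hS₀
      have hV : RealizeIn ZFSet (· ∈ ·) Claim.F2 ![f, g, S₀, Pk κ lam] := by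
        rw [Claim.rl_F2 vinj vmem vtr]
        intro x
        simp only [Matrix.cons_val_zero, Matrix.cons_val_one, Matrix.head_cons,
          Matrix.cons_val_two, Matrix.cons_val_three, Matrix.tail_cons, id_eq]
        rw [hS₀, ZFSet.mem_sep]
        constructor
        · rintro ⟨hxD, heq⟩
          obtain ⟨yf, hyf⟩ := Claim.exists_pair_of_mem hf hxD
          obtain ⟨yg, hyg⟩ := Claim.exists_pair_of_mem hg hxD
          have e1 : app f x = yf := Claim.app_eq_of hyf (fun z hz => hf.1.2 x z yf hz hyf)
          have e2 : app g x = yg := Claim.app_eq_of hyg (fun z hz => hg.1.2 x z yg hz hyg)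
          exact ⟨hxD, yf, hyf, by rw [← e1, heq, e2]; exact hyg⟩
        · rintro ⟨hxD, y, hyf, hyg⟩
          refine ⟨hxD, ?_⟩
          rw [Claim.app_eq_of hyf (fun z hz => hf.1.2 x z y hz hyf),
            Claim.app_eq_of hyg (fun z hz => hg.1.2 x z y hz hyg)]
      have hM := (helem 4 Claim.F2 ![f, g, S₀, Pk κ lam]).1 hV
      rw [Claim.rl_F2 minj mmem mtr] at hM
      simp only [Matrix.cons_val_zero, Matrix.cons_val_one, Matrix.head_cons,
        Matrix.cons_val_two, Matrix.cons_val_three, Matrix.tail_cons] at hM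
      have hMj := hM ⟨jlam, hMjlam⟩
      simp only [Set.mem_setOf_eq]
      constructor
      · rintro ⟨-, hmem2⟩
        obtain ⟨-, y, hyf, hyg⟩ := hMj.1 hmem2
        rw [happf, happg, ← huf y.1 hyf, ← hug y.1 hyg]
      · intro happ
        refine ⟨fun x hx => (ZFSet.mem_sep.1 hx).1, hMj.2 ⟨hjlammem, ⟨cf, hMcf⟩, hcf, ?_⟩⟩
        have hcfg : cf = cg := by rw [← happf, ← happg, happ]
        show ZFSet.pair jlam cf ∈ (j g).1
        rw [hcfg]
        exact hcg
    · -- membership case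
      set S₁ := ZFSet.sep (fun x => app f x ∈ app g x) (Pk κ lam) with hS₁
      have hV : RealizeIn ZFSet (· ∈ ·) Claim.F3 ![f, g, S₁, Pk κ lam] := by
        rw [Claim.rl_F3 vinj vmem vtr]
        intro x
        simp only [Matrix.cons_val_zero, Matrix.cons_val_one, Matrix.head_cons,
          Matrix.cons_val_two, Matrix.cons_val_three, Matrix.tail_cons, id_eq]
        rw [hS₁, ZFSet.mem_sep]
        constructor
        · rintro ⟨hxD, hmm⟩
          obtain ⟨yf, hyf⟩ := Claim.exists_pair_of_mem hf hxD
          obtain ⟨yg, hyg⟩ := Claim.exists_pair_of_mem hg hxD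
          have e1 : app f x = yf := Claim.app_eq_of hyf (fun z hz => hf.1.2 x z yf hz hyf)
          have e2 : app g x = yg := Claim.app_eq_of hyg (fun z hz => hg.1.2 x z yg hz hyg)
          exact ⟨hxD, yf, yg, hyf, hyg, by rw [← e1, ← e2]; exact hmm⟩
        · rintro ⟨hxD, b, c, hbf, hcg2, hbc⟩
          refine ⟨hxD, ?_⟩
          rw [Claim.app_eq_of hbf (fun z hz => hf.1.2 x z b hz hbf),
            Claim.app_eq_of hcg2 (fun z hz => hg.1.2 x z c hz hcg2)]
          exact hbc
      have hM := (helem 4 Claim.F3 ![f, g, S₁, Pk κ lam]).1 hV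
      rw [Claim.rl_F3 minj mmem mtr] at hM
      simp only [Matrix.cons_val_zero, Matrix.cons_val_one, Matrix.head_cons,
        Matrix.cons_val_two, Matrix.cons_val_three, Matrix.tail_cons] at hM
      have hMj := hM ⟨jlam, hMjlam⟩
      simp only [Set.mem_setOf_eq]
      constructor
      · rintro ⟨-, hmem2⟩
        obtain ⟨-, b, c, hbf, hcg2, hbc⟩ := hMj.1 hmem2
        rw [happf, happg, ← huf b.1 hbf, ← hug c.1 hcg2]
        exact hbc
      · intro happ
        refine ⟨fun x hx => (ZFSet.mem_sep.1 hx).1,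
          hMj.2 ⟨hjlammem, ⟨cf, hMcf⟩, ⟨cg, hMcg⟩, hcf, hcg, ?_⟩⟩
        show cf ∈ cg
        rw [happf, happg] at happ
        exact happ
  refine ⟨key, ?_⟩
  have hsub : Subrelation
      (fun f g : {h : ZFSet // IsFuncOn (Pk κ lam) h} =>
        ZFSet.sep (fun x => app f.1 x ∈ app g.1 x) (Pk κ lam) ∈
          {A : ZFSet | A ⊆ Pk κ lam ∧ jlam ∈ (j A).1})
      (InvImage (· ∈ ·) (fun f : {h : ZFSet // IsFuncOn (Pk κ lam) h} =>
        app (j f.1).1 jlam)) := by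
    intro f g h
    exact ((key f.1 g.1 f.2 g.2).2).1 h
  exact Subrelation.wf hsub (InvImage.wf _ ZFSet.mem_wf)
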